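/- Trim lattices satisfy the level condition: if a, b_1, ..., b_k are atoms with δ(a) < δ(b_1) < ... < δ(b_k), then a is not below the join b_1 ∨ ... ∨ b_k. -/

import Mathlib

variable {α : Type*}

/-- An element is join-irreducible if it is not the minimum and is not a join
of two strictly smaller elements. -/
def JoinIrred [Lattice α] (a : α) : Prop :=
  ¬ IsBot a ∧ ∀ b c : α, b < a → c < a → b ⊔ c ≠ a

/-- An element is meet-irreducible if it is not the maximum and is not a meet
of two strictly larger elements. -/
def MeetIrred [Lattice α] (a : α) : Prop :=
  ¬ IsTop a ∧ ∀ b c : α, a < b → a < c → b ⊓ c ≠ a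

/-- An element `x` is left modular if `(y ⊔ x) ⊓ z = y ⊔ (x ⊓ z)` for all `y < z`. -/
def LeftModular [Lattice α] (x : α) : Prop :=
  ∀ y z : α, y < z → (y ⊔ x) ⊓ z = y ⊔ (x ⊓ z)

/-- A maximal chain `⊥ = x 0 ⋖ x 1 ⋖ ⋯ ⋖ x n = ⊤` all of whose elements are left modular. -/
def IsLMChain [Lattice α] {n : ℕ} (x : Fin (n + 1) → α) : Prop :=
  IsBot (x 0) ∧ IsTop (x (Fin.last n)) ∧ (∀ i : Fin n, x i.castSucc ⋖ x i.succ) ∧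
    ∀ i, LeftModular (x i)

/-- A finite lattice is trim if it has a left modular maximal chain of `n + 1` elements,
exactly `n` join-irreducibles and exactly `n` meet-irreducibles. -/
def Trim (α : Type*) [Lattice α] [Finite α] : Prop :=
  ∃ (n : ℕ) (x : Fin (n + 1) → α), IsLMChain x ∧
    Nat.card {v : α // JoinIrred v} = n ∧ Nat.card {v : α // MeetIrred v} = n

/-! ### Auxiliary development -/

/-- A "star system": a weakly increasing chain of left-modular elements from `⊥` to `⊤`
in which each nontrivial step is a covering and each nontrivial level has a greatest
"avoider" and a least "entrant". -/
structure StarSys (α : Type*) [Lattice α] [BoundedOrder α] where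
  X : ℕ → α
  X0 : X 0 = ⊥
  N : ℕ
  Xtop : ∀ s, N ≤ s → X s = ⊤
  step : ∀ s, X s = X (s + 1) ∨ X s ⋖ X (s + 1)
  lmod : ∀ s, LeftModular (X s)
  smax : ∀ s, X s ≠ X (s + 1) →
    ∃ m, X s ≤ m ∧ ¬ X (s + 1) ≤ m ∧ ∀ z, X s ≤ z → ¬ X (s + 1) ≤ z → z ≤ m
  tmin : ∀ s, X s ≠ X (s + 1) →
    ∃ j, j ≤ X (s + 1) ∧ ¬ j ≤ X s ∧ ∀ z, z ≤ X (s + 1) → ¬ z ≤ X s → j ≤ z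

namespace StarSys

variable [Lattice α] [BoundedOrder α]

lemma mono (S : StarSys α) : Monotone S.X :=
  monotone_nat_of_le_succ fun s => by
    rcases S.step s with h | h
    · exact h.le
    · exact h.le

/-- Elements of the interval `[X s ⊓ m, X (s+1) ⊓ m]` are one of the endpoints. -/
lemma meet_between (S : StarSys α) {s : ℕ} (h : S.X s ⋖ S.X (s + 1)) (m z : α)
    (hz1 : S.X s ⊓ m ≤ z) (hz2 : z ≤ S.X (s + 1) ⊓ m) :
    z = S.X s ⊓ m ∨ z = S.X (s + 1) ⊓ m := by
  have hzm : z ≤ m := hz2.trans inf_le_right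
  by_cases hzx : z ≤ S.X s
  · exact Or.inl (le_antisymm (le_inf hzx hzm) hz1)
  · right
    have hsup : S.X s ⊔ z = S.X (s + 1) := by
      rcases h.eq_or_eq le_sup_left (sup_le h.le (hz2.trans inf_le_left)) with h1 | h1
      · exact absurd (le_sup_right.trans h1.le) hzx
      · exact h1
    by_cases hzem : z = m
    · subst hzem
      exact le_antisymm hz2 inf_le_right
    · have hlt : z < m := lt_of_le_of_ne hzm hzem
      have := S.lmod s z m hlt
      -- (z ⊔ X s) ⊓ m = z ⊔ (X s ⊓ m)
      have h2 : S.X (s + 1) ⊓ m = z := by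
        rw [← hsup, sup_comm (S.X s) z, this, sup_eq_left.mpr hz1]
      exact h2.symm

end StarSys

namespace StarSys

open Set

variable [Lattice α] [BoundedOrder α]

/-- A star system restricts to any principal ideal `Set.Iic m`, with chain `X s ⊓ m`. -/
def iic (S : StarSys α) (m : α) : StarSys (Set.Iic m) where
  X := fun s => ⟨S.X s ⊓ m, inf_le_right⟩
  X0 := by
    ext
    simp [S.X0]
  N := S.N
  Xtop := fun s hs => by
    ext
    simp [S.Xtop s hs]
  step := by
    intro s
    rcases S.step s with h | h
    · left; ext; simp [h]
    · by_cases heq : S.X s ⊓ m = S.X (s + 1) ⊓ m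
      · left; ext; exact heq
      · right
        constructor
        · exact lt_of_le_of_ne (Subtype.mk_le_mk.mpr (inf_le_inf_right m h.le))
            (fun hc => heq (congrArg Subtype.val hc))
        · intro c hc1 hc2
          rcases S.meet_between h m c.1 hc1.le hc2.le with h1 | h1
          · exact hc1.ne' (Subtype.ext h1)
          · exact hc2.ne (Subtype.ext h1)
  lmod := by
    intro s y z hyz
    have hyz' : (y : α) < (z : α) := hyz
    apply Subtype.ext
    have hzm : (z : α) ≤ m := z.2
    have hxz : S.X s ⊓ m ⊓ (z : α) = S.X s ⊓ (z : α) := by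
      rw [inf_assoc, inf_eq_right.mpr hzm]
    show ((y : α) ⊔ S.X s ⊓ m) ⊓ (z : α) = (y : α) ⊔ (S.X s ⊓ m ⊓ (z : α))
    rw [hxz]
    apply le_antisymm
    · calc ((y : α) ⊔ S.X s ⊓ m) ⊓ (z : α) ≤ ((y : α) ⊔ S.X s) ⊓ (z : α) :=
            inf_le_inf_right _ (sup_le_sup_left inf_le_left _)
      _ = (y : α) ⊔ (S.X s ⊓ (z : α)) := S.lmod s _ _ hyz'
    · refine sup_le (le_inf (le_sup_left) hyz'.le) (le_inf ?_ inf_le_right)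
      exact le_sup_of_le_right (le_inf inf_le_left (inf_le_right.trans hzm))
  smax := by
    intro s hne'
    have hne : S.X s ≠ S.X (s + 1) := fun h => hne' (by ext; simp [h])
    have hcov : S.X s ⋖ S.X (s + 1) := (S.step s).resolve_left hne
    obtain ⟨M, hM1, hM2, hM3⟩ := S.smax s hne
    obtain ⟨j, hj1, hj2, hj3⟩ := S.tmin s hne
    have hTne : ¬ S.X (s + 1) ⊓ m ≤ S.X s := by
      intro hc
      exact hne' (Subtype.ext (le_antisymm (inf_le_inf_right m hcov.le)
        (le_inf hc inf_le_right)))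
    have hjm : j ≤ S.X (s + 1) ⊓ m := hj3 _ inf_le_left hTne
    have hjsup : S.X s ⊔ j = S.X (s + 1) := by
      rcases hcov.eq_or_eq le_sup_left (sup_le hcov.le hj1) with h1 | h1
      · exact absurd (le_sup_right.trans h1.le) hj2
      · exact h1
    refine ⟨⟨M ⊓ m, inf_le_right⟩, Subtype.mk_le_mk.mpr (inf_le_inf_right m hM1), ?_, ?_⟩
    · intro hc
      have hc' : S.X (s + 1) ⊓ m ≤ M := (Subtype.mk_le_mk.mp hc).trans inf_le_left
      have : S.X (s + 1) ≤ M := by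
        rw [← hjsup]
        exact sup_le hM1 ((hjm.trans hc'))
      exact hM2 this
    · rintro ⟨z, hzm⟩ hz1 hz2
      have hz1' : S.X s ⊓ m ≤ z := hz1
      by_cases hzem : z = m
      · exfalso
        exact hz2 (Subtype.mk_le_mk.mpr (by rw [hzem]; exact inf_le_right))
      have hlt : z < m := lt_of_le_of_ne hzm hzem
      have hnotup : ¬ S.X (s + 1) ≤ S.X s ⊔ z := by
        intro hc
        apply hz2
        refine Subtype.mk_le_mk.mpr ?_
        calc S.X (s + 1) ⊓ m ≤ (S.X s ⊔ z) ⊓ m := inf_le_inf_right m hc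
        _ = z ⊔ (S.X s ⊓ m) := by rw [sup_comm (S.X s) z]; exact S.lmod s z m hlt
        _ ≤ z := sup_le le_rfl hz1'
      have := hM3 _ le_sup_left hnotup
      exact Subtype.mk_le_mk.mpr (le_inf (le_sup_right.trans this) hzm)
  tmin := by
    intro s hne'
    have hne : S.X s ≠ S.X (s + 1) := fun h => hne' (by ext; simp [h])
    have hcov : S.X s ⋖ S.X (s + 1) := (S.step s).resolve_left hne
    obtain ⟨j, hj1, hj2, hj3⟩ := S.tmin s hne
    have hTne : ¬ S.X (s + 1) ⊓ m ≤ S.X s := by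
      intro hc
      exact hne' (Subtype.ext (le_antisymm (inf_le_inf_right m hcov.le)
        (le_inf hc inf_le_right)))
    have hjm : j ≤ S.X (s + 1) ⊓ m := hj3 _ inf_le_left hTne
    refine ⟨⟨j, hjm.trans inf_le_right⟩, Subtype.mk_le_mk.mpr hjm, ?_, ?_⟩
    · intro hc
      exact hj2 ((Subtype.mk_le_mk.mp hc).trans inf_le_left)
    · rintro ⟨z, hzm⟩ hz1 hz2
      have hz1' : z ≤ S.X (s + 1) ⊓ m := hz1
      have : ¬ z ≤ S.X s := fun hc => hz2 (Subtype.mk_le_mk.mpr (le_inf hc hzm))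
      exact Subtype.mk_le_mk.mpr (hj3 z (hz1'.trans inf_le_left) this)

end StarSys

/-- Key exchange lemma, by induction on the cardinality of the lattice. -/
theorem starsys_exchange : ∀ (C : ℕ) {α : Type*} [Lattice α] [BoundedOrder α] [Finite α],
    Nat.card α ≤ C → ∀ (S : StarSys α) (w b y : α) (q : ℕ),
    IsAtom w → IsAtom b → w ≠ b → (∀ s, S.X s ≠ ⊤ → ¬ b ≤ S.X s) →
    w ≤ S.X q → S.X q ⊓ y = ⊥ → w ≤ y ⊔ b → w ≤ y := by
  intro C
  induction C with
  | zero =>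
    intro α _ _ _ hcard
    have : 0 < Nat.card α := Nat.card_pos
    omega
  | succ C ih =>
    intro α _ _ _ hcard S w b y q hw hb hwb hbtop hwq hqy hwyb
    have hqbot : S.X q ≠ ⊥ := by
      intro h
      exact hw.1 (le_bot_iff.mp (h ▸ hwq))
    have hex : ∃ s, S.X s ≠ ⊥ := ⟨q, hqbot⟩
    classical
    have hℓ : S.X (Nat.find hex) ≠ ⊥ := Nat.find_spec hex
    have hℓ0 : Nat.find hex ≠ 0 := fun h => hℓ (by rw [h, S.X0])
    obtain ⟨ℓ', hℓeq⟩ : ∃ l, Nat.find hex = l + 1 := ⟨Nat.find hex - 1, by omega⟩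
    rw [hℓeq] at hℓ
    have hprev : S.X ℓ' = ⊥ := by
      by_contra hc
      exact Nat.find_min hex (by omega) hc
    have hcov : S.X ℓ' ⋖ S.X (ℓ' + 1) := (S.step ℓ').resolve_left (fun h => hℓ (h ▸ hprev))
    have hlq : ℓ' + 1 ≤ q := hℓeq ▸ Nat.find_le hqbot
    have hXly : S.X (ℓ' + 1) ⊓ y = ⊥ :=
      le_bot_iff.mp (hqy ▸ inf_le_inf_right y (S.mono hlq))
    have hXl_not_y : ¬ S.X (ℓ' + 1) ≤ y := fun h =>
      hℓ (le_bot_iff.mp (hXly ▸ le_inf le_rfl h))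
    obtain ⟨m, -, hm2, hm3⟩ := S.smax ℓ' (fun h => hℓ (h ▸ hprev))
    have hm3' : ∀ z, ¬ S.X (ℓ' + 1) ≤ z → z ≤ m := fun z hz =>
      hm3 z (hprev ▸ bot_le) hz
    have hym : y ≤ m := hm3' y hXl_not_y
    -- b is not above the atom X (ℓ'+1)
    have hXb : ¬ S.X (ℓ' + 1) ≤ b := by
      intro hXb
      have heq : S.X (ℓ' + 1) = b := by
        rcases lt_or_eq_of_le hXb with h1 | h1
        · exact absurd (hb.2 _ h1) hℓ
        · exact h1
      have htop : S.X (ℓ' + 1) = ⊤ := by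
        by_contra hc
        exact hbtop _ hc heq.ge
      have hbtop' : b = ⊤ := heq ▸ htop
      have hwlt : w < b := lt_of_le_of_ne (hbtop' ▸ le_top) hwb
      exact hw.1 (hb.2 _ hwlt)
    have hbm : b ≤ m := hm3' b hXb
    -- w is not above the atom X (ℓ'+1)
    have hXw : ¬ S.X (ℓ' + 1) ≤ w := by
      intro hXw
      have heq : S.X (ℓ' + 1) = w := by
        rcases lt_or_eq_of_le hXw with h1 | h1
        · exact absurd (hw.2 _ h1) hℓ
        · exact h1
      exact hm2 (heq ▸ (hwyb.trans (sup_le hym hbm)))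
    have hwm : w ≤ m := hm3' w hXw
    -- pass to the ideal below m
    have hmem : S.X (ℓ' + 1) ∉ Set.Iic m := fun hc => hm2 hc
    have hcard' : Nat.card (Set.Iic m) ≤ C := by
      have : Nat.card (Set.Iic m) < Nat.card α := by
        rw [Nat.card_coe_set_eq, ← Set.ncard_univ]
        exact Set.ncard_lt_ncard
          ⟨Set.subset_univ _, fun h => hmem (h (Set.mem_univ _))⟩ Set.finite_univ
      omega
    set w' : Set.Iic m := ⟨w, hwm⟩
    set b' : Set.Iic m := ⟨b, hbm⟩
    set y' : Set.Iic m := ⟨y, hym⟩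
    have hw' : IsAtom w' := by
      constructor
      · intro hc
        exact hw.1 (congrArg Subtype.val hc)
      · rintro ⟨c, hcm⟩ hc
        exact Subtype.ext (hw.2 c hc)
    have hb' : IsAtom b' := by
      constructor
      · intro hc
        exact hb.1 (congrArg Subtype.val hc)
      · rintro ⟨c, hcm⟩ hc
        exact Subtype.ext (hb.2 c hc)
    have hwb' : w' ≠ b' := fun hc => hwb (congrArg Subtype.val hc)
    have hbtop' : ∀ s, (S.iic m).X s ≠ ⊤ → ¬ b' ≤ (S.iic m).X s := by
      intro s hs hbs
      have hbs' : b ≤ S.X s ⊓ m := hbs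
      have hXs : S.X s = ⊤ := by
        by_contra hc
        exact hbtop s hc (hbs'.trans inf_le_left)
      exact hs (by ext; simp [StarSys.iic, hXs])
    have hwq' : w' ≤ (S.iic m).X q := Subtype.mk_le_mk.mpr (le_inf hwq hwm)
    have hqy' : (S.iic m).X q ⊓ y' = ⊥ := by
      ext
      show S.X q ⊓ m ⊓ y = (⊥ : α)
      rw [inf_comm (S.X q) m, inf_assoc, hqy, inf_bot_eq]
    have hwyb' : w' ≤ y' ⊔ b' := by
      show w ≤ y ⊔ b
      exact hwyb
    exact ih hcard' (S.iic m) w' b' y' q hw' hb' hwb' hbtop' hwq' hqy' hwyb'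

/-- sup over `Fin (k+1)` splits off the last coordinate. -/
lemma sup_univ_split {k : ℕ} [Lattice α] [OrderBot α] (b : Fin (k + 1) → α) :
    Finset.univ.sup b = (Finset.univ.sup (b ∘ Fin.castSucc)) ⊔ b (Fin.last k) := by
  apply le_antisymm
  · apply Finset.sup_le
    intro i _
    rcases Fin.eq_castSucc_or_eq_last i with ⟨j, rfl⟩ | rfl
    · exact le_sup_of_le_left (Finset.le_sup (f := b ∘ Fin.castSucc) (Finset.mem_univ j))
    · exact le_sup_right
  · refine sup_le (Finset.sup_le fun j _ => ?_) (Finset.le_sup (Finset.mem_univ _))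
    exact Finset.le_sup (f := b) (Finset.mem_univ (Fin.castSucc j))

/-- Main inductive lemma: for atoms with strictly increasing least levels,
the join avoids every prefix of the chain below the first level. -/
lemma starsys_inv2 [Lattice α] [BoundedOrder α] [Finite α] (S : StarSys α) :
    ∀ (k : ℕ) (b : Fin k → α) (d : Fin k → ℕ),
    (∀ i, IsAtom (b i)) → (∀ i, b i ≤ S.X (d i)) → (∀ i s, b i ≤ S.X s → d i ≤ s) →
    StrictMono d → ∀ t : ℕ, (∀ i, t < d i) → S.X t ⊓ Finset.univ.sup b = ⊥ := by
  intro k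
  induction k with
  | zero =>
    intro b d _ _ _ _ t _
    simp
  | succ k ih =>
    intro b d hatom hble hdleast hmono t ht
    set y := Finset.univ.sup (b ∘ Fin.castSucc) with hy
    have hXty : S.X t ⊓ y = ⊥ :=
      ih (b ∘ Fin.castSucc) (d ∘ Fin.castSucc) (fun i => hatom _) (fun i => hble _)
        (fun i s h => hdleast _ s h) (hmono.comp Fin.strictMono_castSucc) t (fun i => ht _)
    rw [sup_univ_split b]
    by_contra hne
    obtain ⟨w, hw, hwle⟩ : ∃ w, IsAtom w ∧ w ≤ S.X t ⊓ (y ⊔ b (Fin.last k)) :=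
      (eq_bot_or_exists_atom_le _).resolve_left hne
    have hwXt : w ≤ S.X t := hwle.trans inf_le_left
    have hwyb : w ≤ y ⊔ b (Fin.last k) := hwle.trans inf_le_right
    -- least level of w
    have hwex : ∃ s, w ≤ S.X s := ⟨S.N, (S.Xtop S.N le_rfl) ▸ le_top⟩
    classical
    set q := Nat.find hwex with hqdef
    have hwq : w ≤ S.X q := Nat.find_spec hwex
    have hqt : q ≤ t := Nat.find_le hwXt
    have hXqy : S.X q ⊓ y = ⊥ :=
      le_bot_iff.mp (hXty ▸ inf_le_inf_right y (S.mono hqt))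
    -- set up the star system below X (d (last k))
    set dk := d (Fin.last k) with hdk
    set m := S.X dk with hm
    have hwm : w ≤ m := hwXt.trans (S.mono (ht (Fin.last k)).le)
    have hbm : b (Fin.last k) ≤ m := hble _
    have hym : y ≤ m := by
      apply Finset.sup_le
      intro j _
      exact (hble (Fin.castSucc j)).trans
        (S.mono (hmono (Fin.castSucc_lt_last j)).le)
    have hblastt : ¬ b (Fin.last k) ≤ S.X t := by
      intro hc
      have h1 := hdleast _ t hc
      have h2 := ht (Fin.last k)
      omega
    -- the exchange lemma in the star system on Set.Iic m
    have hwblast : w ≠ b (Fin.last k) := by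
      intro hc
      exact hblastt (hc ▸ hwXt)
    set S' := S.iic m with hS'
    set w' : Set.Iic m := ⟨w, hwm⟩
    set b' : Set.Iic m := ⟨b (Fin.last k), hbm⟩
    set y' : Set.Iic m := ⟨y, hym⟩
    have hw' : IsAtom w' := by
      constructor
      · intro hc
        exact hw.1 (congrArg Subtype.val hc)
      · rintro ⟨c, hcm⟩ hc
        exact Subtype.ext (hw.2 c hc)
    have hb' : IsAtom b' := by
      constructor
      · intro hc
        exact (hatom _).1 (congrArg Subtype.val hc)
      · rintro ⟨c, hcm⟩ hc
        exact Subtype.ext ((hatom _).2 c hc)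
    have hwb' : w' ≠ b' := fun hc => hwblast (congrArg Subtype.val hc)
    have hbtop' : ∀ s, S'.X s ≠ ⊤ → ¬ b' ≤ S'.X s := by
      intro s hs hbs
      have hbs' : b (Fin.last k) ≤ S.X s ⊓ m := hbs
      have hds : dk ≤ s := hdleast _ s (hbs'.trans inf_le_left)
      apply hs
      ext
      show S.X s ⊓ m = m
      exact inf_eq_right.mpr (S.mono hds)
    have hwq' : w' ≤ S'.X q := Subtype.mk_le_mk.mpr (le_inf hwq hwm)
    have hqy' : S'.X q ⊓ y' = ⊥ := by
      ext
      show S.X q ⊓ m ⊓ y = (⊥ : α)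
      rw [inf_comm (S.X q) m, inf_assoc, hXqy, inf_bot_eq]
    have hwyb' : w' ≤ y' ⊔ b' := by
      show w ≤ y ⊔ b (Fin.last k)
      exact hwyb
    have hwy : w ≤ y :=
      starsys_exchange (Nat.card (Set.Iic m)) le_rfl S' w' b' y' q hw' hb' hwb'
        hbtop' hwq' hqy' hwyb'
    exact hw.1 (le_bot_iff.mp (hXty ▸ le_inf hwXt hwy))

section Counting

variable [Lattice α] [BoundedOrder α] [Finite α] {n : ℕ}

/-- From the count of meet-irreducibles, each level has a greatest avoider. -/
lemma exists_level_max (x : Fin (n + 1) → α) (hx : IsLMChain x)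
    (hM : Nat.card {v : α // MeetIrred v} = n) (i₀ : Fin n) :
    ∃ m, x i₀.castSucc ≤ m ∧ ¬ x i₀.succ ≤ m ∧
      ∀ z, x i₀.castSucc ≤ z → ¬ x i₀.succ ≤ z → z ≤ m := by
  classical
  have hsm : StrictMono x := Fin.strictMono_iff_lt_succ.mpr fun i => (hx.2.2.1 i).lt
  set P : Fin n → α → Prop := fun i z => x i.castSucc ≤ z ∧ ¬ x i.succ ≤ z with hP
  have hPself : ∀ i, P i (x i.castSucc) := fun i => ⟨le_rfl, (hx.2.2.1 i).lt.not_ge⟩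
  have hdisj : ∀ i j z, P i z → P j z → i = j := by
    intro i j z hi hj
    by_contra hij
    rcases lt_or_gt_of_ne hij with h | h
    · refine hi.2 ((hsm.monotone (show i.succ ≤ j.castSucc from ?_)).trans hj.1)
      rw [Fin.le_def, Fin.val_succ, Fin.coe_castSucc]
      exact Fin.lt_def.mp h
    · refine hj.2 ((hsm.monotone (show j.succ ≤ i.castSucc from ?_)).trans hi.1)
      rw [Fin.le_def, Fin.val_succ, Fin.coe_castSucc]
      exact Fin.lt_def.mp h
  have hMI : ∀ i z, P i z → (∀ u, P i u → z ≤ u → u = z) → MeetIrred z := by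
    intro i z hz hmax
    constructor
    · intro htop
      exact hz.2 (htop _)
    · intro u v hu hv huv
      have hxu : x i.succ ≤ u := by
        by_contra hxu
        exact hu.ne' (hmax u ⟨hz.1.trans hu.le, hxu⟩ hu.le)
      have hxv : x i.succ ≤ v := by
        by_contra hxv
        exact hv.ne' (hmax v ⟨hz.1.trans hv.le, hxv⟩ hv.le)
      exact hz.2 (huv ▸ le_inf hxu hxv)
  have hup : ∀ i z, P i z → ∃ z', P i z' ∧ z ≤ z' ∧ ∀ u, P i u → z' ≤ u → u = z' := by
    intro i z hz
    obtain ⟨a, ⟨ha1, ha2⟩, hamax⟩ := Set.Finite.exists_maximalFor id {u | P i u ∧ z ≤ u}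
      (Set.toFinite _) ⟨z, hz, le_rfl⟩
    exact ⟨a, ha1, ha2, fun u hu hau => le_antisymm (hamax ⟨hu, ha2.trans hau⟩ hau) hau⟩
  choose F hF1 hF2 hF3 using fun i : Fin n => hup i _ (hPself i)
  refine ⟨F i₀, (hF1 i₀).1, (hF1 i₀).2, ?_⟩
  intro z hz1 hz2
  by_contra hzle
  obtain ⟨z', hz'1, hz'2, hz'3⟩ := hup i₀ z ⟨hz1, hz2⟩
  have hz'ne : ∀ i, z' ≠ F i := by
    intro i hc
    have : i = i₀ := hdisj i i₀ (F i) (hF1 i) (hc ▸ hz'1)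
    exact hzle (hz'2.trans (hc.symm ▸ this ▸ le_rfl))
  set G : Option (Fin n) → {v : α // MeetIrred v} := fun o =>
    Option.rec ⟨z', hMI i₀ z' hz'1 hz'3⟩ (fun i => ⟨F i, hMI i (F i) (hF1 i) (hF3 i)⟩) o
    with hG
  have hGinj : Function.Injective G := by
    intro o1 o2 h
    have h' := congrArg Subtype.val h
    match o1, o2 with
    | none, none => rfl
    | some i, some j =>
      have hFij : F i = F j := h'
      exact congrArg some (hdisj i j (F i) (hF1 i) (hFij.symm ▸ hF1 j))
    | some i, none =>
      have hFz : F i = z' := h'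
      exact absurd hFz.symm (hz'ne i)
    | none, some i =>
      have hFz : z' = F i := h'
      exact absurd hFz (hz'ne i)
  have := Nat.card_le_card_of_injective G hGinj
  rw [hM] at this
  simp [Nat.card_eq_fintype_card] at this

/-- From the count of join-irreducibles, each level has a least entrant. -/
lemma exists_level_min (x : Fin (n + 1) → α) (hx : IsLMChain x)
    (hJ : Nat.card {v : α // JoinIrred v} = n) (i₀ : Fin n) :
    ∃ j, j ≤ x i₀.succ ∧ ¬ j ≤ x i₀.castSucc ∧
      ∀ z, z ≤ x i₀.succ → ¬ z ≤ x i₀.castSucc → j ≤ z := by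
  classical
  have hsm : StrictMono x := Fin.strictMono_iff_lt_succ.mpr fun i => (hx.2.2.1 i).lt
  set P : Fin n → α → Prop := fun i z => z ≤ x i.succ ∧ ¬ z ≤ x i.castSucc with hP
  have hPself : ∀ i, P i (x i.succ) := fun i => ⟨le_rfl, (hx.2.2.1 i).lt.not_ge⟩
  have hdisj : ∀ i j z, P i z → P j z → i = j := by
    intro i j z hi hj
    by_contra hij
    rcases lt_or_gt_of_ne hij with h | h
    · refine hj.2 (hi.1.trans (hsm.monotone (show i.succ ≤ j.castSucc from ?_)))
      rw [Fin.le_def, Fin.val_succ, Fin.coe_castSucc]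
      exact Fin.lt_def.mp h
    · refine hi.2 (hj.1.trans (hsm.monotone (show j.succ ≤ i.castSucc from ?_)))
      rw [Fin.le_def, Fin.val_succ, Fin.coe_castSucc]
      exact Fin.lt_def.mp h
  have hJI : ∀ i z, P i z → (∀ u, P i u → u ≤ z → u = z) → JoinIrred z := by
    intro i z hz hmin
    constructor
    · intro hbot
      exact hz.2 (hbot _)
    · intro u v hu hv huv
      have hxu : u ≤ x i.castSucc := by
        by_contra hxu
        exact hu.ne (hmin u ⟨hu.le.trans hz.1, hxu⟩ hu.le)
      have hxv : v ≤ x i.castSucc := by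
        by_contra hxv
        exact hv.ne (hmin v ⟨hv.le.trans hz.1, hxv⟩ hv.le)
      exact hz.2 (huv ▸ sup_le hxu hxv)
  have hdown : ∀ i z, P i z → ∃ z', P i z' ∧ z' ≤ z ∧ ∀ u, P i u → u ≤ z' → u = z' := by
    intro i z hz
    obtain ⟨a, ⟨ha1, ha2⟩, hamin⟩ := Set.Finite.exists_minimalFor id {u | P i u ∧ u ≤ z}
      (Set.toFinite _) ⟨z, hz, le_rfl⟩
    exact ⟨a, ha1, ha2, fun u hu hau => le_antisymm hau (hamin ⟨hu, hau.trans ha2⟩ hau)⟩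
  choose F hF1 hF2 hF3 using fun i : Fin n => hdown i _ (hPself i)
  refine ⟨F i₀, (hF1 i₀).1, (hF1 i₀).2, ?_⟩
  intro z hz1 hz2
  by_contra hzle
  obtain ⟨z', hz'1, hz'2, hz'3⟩ := hdown i₀ z ⟨hz1, hz2⟩
  have hz'ne : ∀ i, z' ≠ F i := by
    intro i hc
    have : i = i₀ := hdisj i i₀ (F i) (hF1 i) (hc ▸ hz'1)
    exact hzle ((this ▸ hc ▸ le_rfl : F i₀ ≤ z').trans hz'2)
  set G : Option (Fin n) → {v : α // JoinIrred v} := fun o =>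
    Option.rec ⟨z', hJI i₀ z' hz'1 hz'3⟩ (fun i => ⟨F i, hJI i (F i) (hF1 i) (hF3 i)⟩) o
    with hG
  have hGinj : Function.Injective G := by
    intro o1 o2 h
    have h' := congrArg Subtype.val h
    match o1, o2 with
    | none, none => rfl
    | some i, some j =>
      have hFij : F i = F j := h'
      exact congrArg some (hdisj i j (F i) (hF1 i) (hFij.symm ▸ hF1 j))
    | some i, none =>
      have hFz : F i = z' := h'
      exact absurd hFz.symm (hz'ne i)
    | none, some i =>
      have hFz : z' = F i := h'
      exact absurd hFz (hz'ne i)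
  have := Nat.card_le_card_of_injective G hGinj
  rw [hJ] at this
  simp [Nat.card_eq_fintype_card] at this

end Counting

section Build

variable [Lattice α] [BoundedOrder α] [Finite α] {n : ℕ}

/-- The chain reindexed over `ℕ`. -/
def chainOf (x : Fin (n + 1) → α) : ℕ → α :=
  fun s => x ⟨min s n, Nat.lt_succ_of_le (min_le_right s n)⟩

lemma chainOf_coe (x : Fin (n + 1) → α) (i : Fin (n + 1)) : chainOf x (i : ℕ) = x i := by
  unfold chainOf
  congr 1
  ext
  simp [Nat.min_eq_left (Nat.lt_succ_iff.mp i.isLt)]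

lemma chainOf_of_lt (x : Fin (n + 1) → α) {s : ℕ} (h : s < n) :
    chainOf x s = x (Fin.castSucc ⟨s, h⟩) := by
  unfold chainOf
  congr 1
  ext
  simp only [Fin.coe_castSucc]
  omega

lemma chainOf_succ_of_lt (x : Fin (n + 1) → α) {s : ℕ} (h : s < n) :
    chainOf x (s + 1) = x (Fin.succ ⟨s, h⟩) := by
  unfold chainOf
  congr 1
  ext
  simp only [Fin.val_succ]
  omega

lemma chainOf_of_ge (x : Fin (n + 1) → α) {s : ℕ} (h : n ≤ s) :
    chainOf x s = x (Fin.last n) := by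
  unfold chainOf
  congr 1
  ext
  simp only [Fin.last]
  omega

/-- Build a star system from a left modular maximal chain in a trim lattice. -/
noncomputable def mkStar (x : Fin (n + 1) → α) (hx : IsLMChain x)
    (hJ : Nat.card {v : α // JoinIrred v} = n)
    (hM : Nat.card {v : α // MeetIrred v} = n) : StarSys α where
  X := chainOf x
  X0 := by
    have h0 : ((0 : Fin (n + 1)) : ℕ) = 0 := rfl
    rw [← h0, chainOf_coe]
    exact hx.1.eq_bot
  N := n
  Xtop := fun s hs => by
    rw [chainOf_of_ge x hs]
    exact hx.2.1.eq_top
  step := fun s => by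
    by_cases h : s < n
    · right
      rw [chainOf_of_lt x h, chainOf_succ_of_lt x h]
      exact hx.2.2.1 ⟨s, h⟩
    · left
      rw [chainOf_of_ge x (by omega), chainOf_of_ge x (by omega)]
  lmod := fun s => hx.2.2.2 _
  smax := fun s hne => by
    have h : s < n := by
      by_contra h
      exact hne (by rw [chainOf_of_ge x (by omega), chainOf_of_ge x (by omega)])
    rw [chainOf_of_lt x h, chainOf_succ_of_lt x h]
    exact exists_level_max x hx hM ⟨s, h⟩
  tmin := fun s hne => by
    have h : s < n := by
      by_contra h
      exact hne (by rw [chainOf_of_ge x (by omega), chainOf_of_ge x (by omega)])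
    rw [chainOf_of_lt x h, chainOf_succ_of_lt x h]
    exact exists_level_min x hx hJ ⟨s, h⟩

lemma mkStar_X (x : Fin (n + 1) → α) (hx : IsLMChain x)
    (hJ : Nat.card {v : α // JoinIrred v} = n)
    (hM : Nat.card {v : α // MeetIrred v} = n) (i : Fin (n + 1)) :
    (mkStar x hx hJ hM).X (i : ℕ) = x i := chainOf_coe x i

end Build

/-- The level condition: if `a, b 1, …, b k` are atoms whose labels satisfy
`δ a < δ (b 1) < ⋯ < δ (b k)`, then `a` is not below `b 1 ⊔ ⋯ ⊔ b k`. -/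
theorem level_condition [Lattice α] [BoundedOrder α] [Finite α] {n : ℕ}
    (x : Fin (n + 1) → α) (hx : IsLMChain x)
    (hJ : Nat.card {v : α // JoinIrred v} = n)
    (hM : Nat.card {v : α // MeetIrred v} = n)
    {k : ℕ} (a : α) (b : Fin k → α) (ha : IsAtom a) (hb : ∀ i, IsAtom (b i))
    (da : Fin (n + 1)) (db : Fin k → Fin (n + 1))
    (hda : IsLeast {i : Fin (n + 1) | a ≤ x i} da)
    (hdb : ∀ i, IsLeast {j : Fin (n + 1) | b i ≤ x j} (db i))
    (hmono : StrictMono db) (hlt : ∀ i, da < db i) :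
    ¬ a ≤ Finset.univ.sup b := by
  intro hsup
  set S := mkStar x hx hJ hM with hS
  have key : S.X (da : ℕ) ⊓ Finset.univ.sup b = ⊥ := by
    apply starsys_inv2 S k b (fun i => ((db i : ℕ)))
    · exact hb
    · intro i
      rw [mkStar_X]
      exact (hdb i).1
    · intro i s hbi
      have hle : b i ≤ x ⟨min s n, by omega⟩ := hbi
      have := (hdb i).2 hle
      have hval : ((db i : ℕ)) ≤ min s n := this
      omega
    · intro i j hij
      exact hmono hij
    · intro i
      exact hlt i
  have haX : a ≤ S.X (da : ℕ) := by
    rw [mkStar_X]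
    exact hda.1
  exact ha.1 (le_bot_iff.mp (key ▸ le_inf haX hsup))
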